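/- The polynomial p(x) = 1 + 5x − 8x² − 80x³ − 78x⁴ + 146x⁵ − 80x⁶ − 584x⁷ + 677x⁸ + 1537x⁹ is irreducible over ℚ. -/

import Mathlib

open Polynomial

private abbrev Fq := ZMod 19

instance fact_prime_19 : Fact (Nat.Prime 19) := ⟨by norm_num⟩

/-- A monic scalar multiple of the mod-19 reduction of the coherence polynomial. -/
noncomputable def fp : Fq[X] := 9 + 7 * X + 4 * X ^ 2 + 2 * X ^ 3 + X ^ 4 + 3 * X ^ 5 + 2 * X ^ 6 + 7 * X ^ 7 + 13 * X ^ 8 + X ^ 9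

private lemma nineteen : (19 : Fq[X]) = 0 := by
  rw [← map_ofNat (C : Fq →+* Fq[X]) 19, show (19 : Fq) = 0 by decide, map_zero]

private lemma dstep {a b c : ℕ} {s u q t E : Fq[X]} (hc : a + b = c)
    (hs : fp ∣ X ^ a - s) (hu : fp ∣ X ^ b - u)
    (h : s * u = fp * q + t + 19 * E) : fp ∣ X ^ c - t := by
  subst hc
  rw [nineteen, zero_mul, add_zero] at h
  have key : X ^ (a + b) - t = X ^ b * (X ^ a - s) + s * (X ^ b - u) + fp * q := by
    linear_combination h
  rw [key]
  exact dvd_add (dvd_add (hs.mul_left _) (hu.mul_left _)) (dvd_mul_right _ _)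

private lemma copr_final {e : ℕ} {r u v E : Fq[X]} (hd : fp ∣ X ^ e - r)
    (h : u * fp + v * (r - X) = 1 + 19 * E) : IsCoprime fp (X ^ e - X) := by
  rw [nineteen, zero_mul, add_zero] at h
  obtain ⟨c, hc⟩ := hd
  exact ⟨u - v * c, v, by linear_combination h + v * hc⟩

set_option maxHeartbeats 4000000 in
private lemma coprime_all : IsCoprime fp (X ^ (19 : ℕ) - X) ∧ IsCoprime fp (X ^ (361 : ℕ) - X) ∧
    IsCoprime fp (X ^ (6859 : ℕ) - X) ∧ IsCoprime fp (X ^ (130321 : ℕ) - X) := by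
  have d1 : fp ∣ X ^ 1 - X := by simp
  have d2 : fp ∣ X ^ 2 - (X ^ 2) :=
    dstep (by norm_num) d1 d1 (q := 0) (E := 0) (by unfold fp; ring)
  have d4 : fp ∣ X ^ 4 - (X ^ 4) :=
    dstep (by norm_num) d2 d2 (q := 0) (E := 0) (by unfold fp; ring)
  have d8 : fp ∣ X ^ 8 - (X ^ 8) :=
    dstep (by norm_num) d4 d4 (q := 0) (E := 0) (by unfold fp; ring)
  have d16 : fp ∣ X ^ 16 - (17 + 13 * X + 3 * X ^ 2 + 16 * X ^ 3 + 12 * X ^ 4 + 4 * X ^ 5 + 11 * X ^ 6 + 9 * X ^ 8) :=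
    dstep (by norm_num) d8 d8 (q := (-48446280) + 3891550 * X + (-312597) * X ^ 2 + 25110 * X ^ 3 + (-2017) * X ^ 4 + 162 * X ^ 5 + (-13) * X ^ 6 + X ^ 7) (E := 22948237 + 16005263 * X + 8913560 * X ^ 2 + 4383607 * X ^ 3 + 2197681 * X ^ 4 + 7472879 * X ^ 5 + 4499333 * X ^ 6 + 17487211 * X ^ 7 + 31742757 * X ^ 8) (by unfold fp; ring)
  have d18 : fp ∣ X ^ 18 - (8 + 16 * X + 4 * X ^ 2 + 2 * X ^ 3 + 7 * X ^ 4 + 16 * X ^ 5 + 10 * X ^ 6 + 7 * X ^ 7 + 6 * X ^ 8) :=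
    dstep (by norm_num) d16 d2 (q := (-117) + 9 * X) (E := 55 + 38 * X + 22 * X ^ 2 + 11 * X ^ 3 + 5 * X ^ 4 + 18 * X ^ 5 + 11 * X ^ 6 + 42 * X ^ 7 + 77 * X ^ 8) (by unfold fp; ring)
  have d19 : fp ∣ X ^ 19 - (3 + 4 * X + 11 * X ^ 2 + 11 * X ^ 3 + 15 * X ^ 4 + 8 * X ^ 5 + 4 * X ^ 6 + 6 * X ^ 7 + 5 * X ^ 8) :=
    dstep (by norm_num) d18 d1 (q := 6) (E := (-3) + (-2) * X + (-1) * X ^ 2 + (-1) * X ^ 3 + (-1) * X ^ 4 + (-1) * X ^ 5 + (-2) * X ^ 7 + (-4) * X ^ 8) (by unfold fp; ring)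
  have d38 : fp ∣ X ^ 38 - (8 + X ^ 2 + 10 * X ^ 4 + 5 * X ^ 5 + 16 * X ^ 6 + 9 * X ^ 7 + 6 * X ^ 8) :=
    dstep (by norm_num) d19 d19 (q := (-998683436) + 80221382 * X + (-6443933) * X ^ 2 + 517640 * X ^ 3 + (-41565) * X ^ 4 + 3346 * X ^ 5 + (-265) * X ^ 6 + 25 * X ^ 7) (E := 473060575 + 329936402 * X + 183746292 * X ^ 2 + 90364751 * X ^ 3 + 45303542 * X ^ 4 + 154047762 * X ^ 5 + 92750375 * X ^ 6 + 360485652 * X ^ 7 + 654352961 * X ^ 8) (by unfold fp; ring)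
  have d76 : fp ∣ X ^ 76 - (1 + 13 * X + 9 * X ^ 2 + X ^ 3 + 6 * X ^ 4 + 5 * X ^ 5 + 13 * X ^ 6 + 7 * X ^ 7 + 13 * X ^ 8) :=
    dstep (by norm_num) d38 d38 (q := (-1401268746) + 112559867 * X + (-9041595) * X ^ 2 + 726292 * X ^ 3 + (-58317) * X ^ 4 + 4701 * X ^ 5 + (-360) * X ^ 6 + 36 * X ^ 7) (E := 663758883 + 462939074 * X + 257817383 * X ^ 2 + 126792240 * X ^ 3 + 63566124 * X ^ 4 + 216146862 * X ^ 5 + 130139514 * X ^ 6 + 505803166 * X ^ 7 + 918133119 * X ^ 8) (by unfold fp; ring)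
  have d152 : fp ∣ X ^ 152 - (8 + 4 * X + 15 * X ^ 2 + 9 * X ^ 3 + 4 * X ^ 5 + 9 * X ^ 6 + 18 * X ^ 7 + 16 * X ^ 8) :=
    dstep (by norm_num) d76 d76 (q := (-7593062801) + 609928861 * X + (-48993803) * X ^ 2 + 3935529 * X ^ 3 + (-316108) * X ^ 4 + 25399 * X ^ 5 + (-2015) * X ^ 6 + 169 * X ^ 7) (E := 3596713958 + 2508530520 * X + 1397036504 * X ^ 2 + 687049855 * X ^ 3 + 344446141 * X ^ 4 + 1171236283 * X ^ 5 + 705187726 * X ^ 6 + 2740798495 * X ^ 7 + 4975093056 * X ^ 8) (by unfold fp; ring)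
  have d304 : fp ∣ X ^ 304 - (7 + 18 * X + 2 * X ^ 2 + 8 * X ^ 3 + 13 * X ^ 4 + 11 * X ^ 5 + 4 * X ^ 6 + 5 * X ^ 7 + 14 * X ^ 8) :=
    dstep (by norm_num) d152 d152 (q := (-10341079859) + 830669154 * X + (-66725217) * X ^ 2 + 5359861 * X ^ 3 + (-430544) * X ^ 4 + 34596 * X ^ 5 + (-2752) * X ^ 6 + 256 * X ^ 7) (E := 4898406252 + 3416396667 * X + 1902640135 * X ^ 2 + 935701112 * X ^ 3 + 469105188 * X ^ 4 + 1595120220 * X ^ 5 + 960403304 * X ^ 6 + 3732725086 * X ^ 7 + 6775636644 * X ^ 8) (by unfold fp; ring)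
  have d342 : fp ∣ X ^ 342 - (16 + 3 * X ^ 2 + 11 * X ^ 3 + 18 * X ^ 4 + 10 * X ^ 5 + 6 * X ^ 6 + 8 * X ^ 7 + 13 * X ^ 8) :=
    dstep (by norm_num) d304 d38 (q := (-3548426020) + 285034844 * X + (-22896012) * X ^ 2 + 1839184 * X ^ 3 + (-147713) * X ^ 4 + 11873 * X ^ 5 + (-936) * X ^ 6 + 84 * X ^ 7) (E := 1680833380 + 1172298352 * X + 652869700 * X ^ 2 + 321075377 * X ^ 3 + 160968193 * X ^ 4 + 547347681 * X ^ 5 + 329551662 * X ^ 6 + 1280842922 * X ^ 7 + 2324984024 * X ^ 8) (by unfold fp; ring)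
  have d361 : fp ∣ X ^ 361 - (16 + 9 * X + 3 * X ^ 2 + 17 * X ^ 3 + 16 * X ^ 4 + 16 * X ^ 5 + 14 * X ^ 6 + 12 * X ^ 7 + 15 * X ^ 8) :=
    dstep (by norm_num) d342 d19 (q := (-2725665223) + 218944848 * X + (-17587186) * X ^ 2 + 1412751 * X ^ 3 + (-113457) * X ^ 4 + 9126 * X ^ 5 + (-727) * X ^ 6 + 65 * X ^ 7) (E := 1291104581 + 900481736 * X + 501491148 * X ^ 2 + 246628779 * X ^ 3 + 123645078 * X ^ 4 + 420436138 * X ^ 5 + 253139713 * X ^ 6 + 983858485 * X ^ 7 + 1785898338 * X ^ 8) (by unfold fp; ring)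
  have d722 : fp ∣ X ^ 722 - (9 + 11 * X + 14 * X ^ 2 + X ^ 3 + 3 * X ^ 4 + 6 * X ^ 5 + 16 * X ^ 6 + 2 * X ^ 7 + 6 * X ^ 8) :=
    dstep (by norm_num) d361 d361 (q := (-9657204860) + 775735474 * X + (-62312559) * X ^ 2 + 5005450 * X ^ 3 + (-402021) * X ^ 4 + 32334 * X ^ 5 + (-2565) * X ^ 6 + 225 * X ^ 7) (E := 4574465473 + 3190463949 * X + 1776814964 * X ^ 2 + 873821436 * X ^ 3 + 438082369 * X ^ 4 + 1489631919 * X ^ 5 + 896890047 * X ^ 6 + 3485873011 * X ^ 7 + 6327551118 * X ^ 8) (by unfold fp; ring)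
  have d1444 : fp ∣ X ^ 1444 - (2 + 15 * X + 18 * X ^ 4 + 5 * X ^ 5 + 9 * X ^ 6 + 12 * X ^ 7 + 9 * X ^ 8) :=
    dstep (by norm_num) d722 d722 (q := (-1709129008) + 137289408 * X + (-11028044) * X ^ 2 + 885852 * X ^ 3 + (-71136) * X ^ 4 + 5716 * X ^ 5 + (-444) * X ^ 6 + 36 * X ^ 7) (E := 809587429 + 564647293 * X + 314460155 * X ^ 2 + 154648650 * X ^ 3 + 77531678 * X ^ 4 + 263634579 * X ^ 5 + 158731324 * X ^ 6 + 616928698 * X ^ 7 + 1119847980 * X ^ 8) (by unfold fp; ring)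
  have d2888 : fp ∣ X ^ 2888 - (12 + 16 * X + 4 * X ^ 2 + 18 * X ^ 3 + 9 * X ^ 4 + X ^ 5 + X ^ 6 + 6 * X ^ 7) :=
    dstep (by norm_num) d1444 d1444 (q := (-3172523350) + 254839669 * X + (-20470530) * X ^ 2 + 1644357 * X ^ 3 + (-132057) * X ^ 4 + 10620 * X ^ 5 + (-837) * X ^ 6 + 81 * X ^ 7) (E := 1502774218 + 1048110867 * X + 583707932 * X ^ 2 + 287062237 * X ^ 3 + 143916011 * X ^ 4 + 489364389 * X ^ 5 + 294640585 * X ^ 6 + 1145156759 * X ^ 7 + 2078686746 * X ^ 8) (by unfold fp; ring)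
  have d5776 : fp ∣ X ^ 5776 - (14 + 18 * X + 5 * X ^ 2 + 15 * X ^ 3 + 7 * X ^ 4 + 7 * X ^ 5 + 16 * X ^ 6 + 3 * X ^ 7 + 4 * X ^ 8) :=
    dstep (by norm_num) d2888 d2888 (q := (-10963526) + 880667 * X + (-70727) * X ^ 2 + 5689 * X ^ 3 + (-456) * X ^ 4 + 36 * X ^ 5) (E := 5193256 + 3622055 * X + 2017175 * X ^ 2 + 992043 * X ^ 3 + 497378 * X ^ 4 + 1691154 * X ^ 5 + 1018232 * X ^ 6 + 3957427 * X ^ 7 + 7183487 * X ^ 8) (by unfold fp; ring)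
  have d6498 : fp ∣ X ^ 6498 - (3 * X + 15 * X ^ 2 + 14 * X ^ 3 + 16 * X ^ 4 + 5 * X ^ 5 + 14 * X ^ 6 + X ^ 7 + 11 * X ^ 8) :=
    dstep (by norm_num) d5776 d722 (q := (-1110396276) + 89194956 * X + (-7164759) * X ^ 2 + 575534 * X ^ 3 + (-46208) * X ^ 4 + 3716 * X ^ 5 + (-286) * X ^ 6 + 24 * X ^ 7) (E := 525977190 + 366843139 * X + 204300193 * X ^ 2 + 100472983 * X ^ 3 + 50371204 * X ^ 4 + 171279566 * X ^ 5 + 103125444 * X ^ 6 + 400809621 * X ^ 7 + 727548956 * X ^ 8) (by unfold fp; ring)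
  have d6859 : fp ∣ X ^ 6859 - (6 + 14 * X + 4 * X ^ 2 + 5 * X ^ 3 + 2 * X ^ 4 + 13 * X ^ 5 + 12 * X ^ 6 + 17 * X ^ 8) :=
    dstep (by norm_num) d6498 d361 (q := (-7529495776) + 604822730 * X + (-48583626) * X ^ 2 + 3902622 * X ^ 3 + (-313446) * X ^ 4 + 25195 * X ^ 5 + (-1998) * X ^ 6 + 165 * X ^ 7) (E := 3566603262 + 2487529784 * X + 1385340889 * X ^ 2 + 681298041 * X ^ 3 + 341562524 * X ^ 4 + 1161431015 * X ^ 5 + 699284104 * X ^ 6 + 2717853304 * X ^ 7 + 4933442962 * X ^ 8) (by unfold fp; ring)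
  have d13718 : fp ∣ X ^ 13718 - (13 + 10 * X + 10 * X ^ 2 + 9 * X ^ 3 + 12 * X ^ 4 + 2 * X ^ 5 + 15 * X ^ 6 + 10 * X ^ 7 + 4 * X ^ 8) :=
    dstep (by norm_num) d6859 d6859 (q := (-14117769337) + 1134039747 * X + (-91094139) * X ^ 2 + 7317352 * X ^ 3 + (-587775) * X ^ 4 + 47226 * X ^ 5 + (-3757) * X ^ 6 + 289 * X ^ 7) (E := 6687364424 + 4664106726 * X + 2597507716 * X ^ 2 + 1277430666 * X ^ 3 + 640428162 * X ^ 4 + 2177677725 * X ^ 5 + 1311154407 * X ^ 6 + 5095962196 * X ^ 7 + 9250182428 * X ^ 8) (by unfold fp; ring)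
  have d27436 : fp ∣ X ^ 27436 - (11 + 8 * X + 8 * X ^ 3 + 6 * X ^ 4 + 6 * X ^ 5 + 12 * X ^ 6 + 7 * X ^ 7 + 9 * X ^ 8) :=
    dstep (by norm_num) d13718 d13718 (q := (-525328447) + 42198138 * X + (-3389621) * X ^ 2 + 272293 * X ^ 3 + (-21856) * X ^ 4 + 1772 * X ^ 5 + (-128) * X ^ 6 + 16 * X ^ 7) (E := 248839799 + 173553481 * X + 96654409 * X ^ 2 + 47533762 * X ^ 3 + 23830626 * X ^ 4 + 81032357 * X ^ 5 + 48788654 * X ^ 6 + 189623032 * X ^ 7 + 344203405 * X ^ 8) (by unfold fp; ring)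
  have d54872 : fp ∣ X ^ 54872 - (4 + 18 * X + 16 * X ^ 2 + 9 * X ^ 3 + 10 * X ^ 4 + 17 * X ^ 5 + 7 * X ^ 6 + 8 * X ^ 7 + 5 * X ^ 8) :=
    dstep (by norm_num) d27436 d27436 (q := (-3510342061) + 281975674 * X + (-22650286) * X ^ 2 + 1819446 * X ^ 3 + (-146134) * X ^ 4 + 11749 * X ^ 5 + (-927) * X ^ 6 + 81 * X ^ 7) (E := 1662793614 + 1159716501 * X + 645862692 * X ^ 2 + 317629399 * X ^ 3 + 159240589 * X ^ 4 + 541473195 * X ^ 5 + 326014713 * X ^ 6 + 1267096103 * X ^ 7 + 2300030817 * X ^ 8) (by unfold fp; ring)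
  have d109744 : fp ∣ X ^ 109744 - (2 + 7 * X + 14 * X ^ 2 + 9 * X ^ 3 + 18 * X ^ 4 + 4 * X ^ 5 + 6 * X ^ 6 + 7 * X ^ 7 + 11 * X ^ 8) :=
    dstep (by norm_num) d54872 d54872 (q := (-935418706) + 75139527 * X + (-6035704) * X ^ 2 + 484853 * X ^ 3 + (-38925) * X ^ 4 + 3144 * X ^ 5 + (-245) * X ^ 6 + 25 * X ^ 7) (E := 443093072 + 309035544 * X + 172106311 * X ^ 2 + 84640326 * X ^ 3 + 42433656 * X ^ 4 + 144289134 * X ^ 5 + 86874831 * X ^ 6 + 337649576 * X ^ 7 + 612900933 * X ^ 8) (by unfold fp; ring)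
  have d123462 : fp ∣ X ^ 123462 - (3 + 7 * X + 14 * X ^ 2 + 15 * X ^ 3 + 16 * X ^ 5 + 6 * X ^ 6 + 14 * X ^ 7 + 14 * X ^ 8) :=
    dstep (by norm_num) d109744 d13718 (q := (-1671101403) + 134234775 * X + (-10782658) * X ^ 2 + 866161 * X ^ 3 + (-69556) * X ^ 4 + 5593 * X ^ 5 + (-434) * X ^ 6 + 44 * X ^ 7) (E := 791574350 + 552084050 * X + 307463493 * X ^ 2 + 151207747 * X ^ 3 + 75806627 * X ^ 4 + 257768799 * X ^ 5 + 155199599 * X ^ 6 + 603202214 * X ^ 7 + 1094931698 * X ^ 8) (by unfold fp; ring)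
  have d130321 : fp ∣ X ^ 130321 - (12 + 11 * X + 14 * X ^ 2 + X ^ 3 + 2 * X ^ 4 + X ^ 5 + 10 * X ^ 6 + 7 * X ^ 7 + 10 * X ^ 8) :=
    dstep (by norm_num) d123462 d6859 (q := (-10673283357) + 857354109 * X + (-68868775) * X ^ 2 + 5532070 * X ^ 3 + (-444378) * X ^ 4 + 35732 * X ^ 5 + (-2856) * X ^ 6 + 238 * X ^ 7) (E := 5055765801 + 3526147189 * X + 1963761780 * X ^ 2 + 965760179 * X ^ 3 + 484175024 * X ^ 4 + 1646362872 * X ^ 5 + 991255926 * X ^ 6 + 3852637565 * X ^ 7 + 6993301562 * X ^ 8) (by unfold fp; ring)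
  refine ⟨?_, ?_, ?_, ?_⟩
  · exact copr_final d19 (u := 8 + 4 * X + 14 * X ^ 2 + 8 * X ^ 3 + 15 * X ^ 4 + 5 * X ^ 5 + 14 * X ^ 6 + 5 * X ^ 7) (v := 8 + 12 * X + 17 * X ^ 2 + 7 * X ^ 3 + 6 * X ^ 4 + 5 * X ^ 5 + 18 * X ^ 6 + 12 * X ^ 7 + 18 * X ^ 8) (E := 5 + 8 * X + 19 * X ^ 2 + 26 * X ^ 3 + 39 * X ^ 4 + 41 * X ^ 5 + 46 * X ^ 6 + 45 * X ^ 7 + 51 * X ^ 8 + 51 * X ^ 9 + 58 * X ^ 10 + 47 * X ^ 11 + 41 * X ^ 12 + 27 * X ^ 13 + 24 * X ^ 14 + 13 * X ^ 15 + 5 * X ^ 16) (by unfold fp; ring)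
  · exact copr_final d361 (u := 9 + 8 * X + 16 * X ^ 2 + X ^ 3 + 9 * X ^ 4 + 3 * X ^ 5 + 4 * X ^ 6 + 17 * X ^ 7) (v := 14 + 4 * X ^ 2 + 14 * X ^ 3 + 4 * X ^ 4 + 11 * X ^ 5 + 16 * X ^ 6 + 12 * X ^ 7 + 9 * X ^ 8) (E := 16 + 13 * X + 18 * X ^ 2 + 35 * X ^ 3 + 31 * X ^ 4 + 37 * X ^ 5 + 53 * X ^ 6 + 64 * X ^ 7 + 73 * X ^ 8 + 63 * X ^ 9 + 65 * X ^ 10 + 60 * X ^ 11 + 50 * X ^ 12 + 41 * X ^ 13 + 36 * X ^ 14 + 27 * X ^ 15 + 8 * X ^ 16) (by unfold fp; ring)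
  · exact copr_final d6859 (u := 4 + 7 * X + 10 * X ^ 2 + 4 * X ^ 3 + 14 * X ^ 4 + X ^ 5 + 14 * X ^ 6 + 3 * X ^ 7) (v := 10 + 17 * X + 13 * X ^ 2 + 14 * X ^ 3 + 11 * X ^ 5 + 16 * X ^ 6 + 17 * X ^ 7 + 11 * X ^ 8) (E := 5 + 17 * X + 26 * X ^ 2 + 27 * X ^ 3 + 29 * X ^ 4 + 27 * X ^ 5 + 48 * X ^ 6 + 52 * X ^ 7 + 60 * X ^ 8 + 54 * X ^ 9 + 39 * X ^ 10 + 46 * X ^ 11 + 35 * X ^ 12 + 35 * X ^ 13 + 32 * X ^ 14 + 18 * X ^ 15 + 10 * X ^ 16) (by unfold fp; ring)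
  · exact copr_final d130321 (u := 4 + 3 * X + 5 * X ^ 2 + X ^ 3 + 8 * X ^ 5 + 5 * X ^ 6 + 6 * X ^ 7) (v := 5 + 15 * X + 16 * X ^ 2 + 3 * X ^ 3 + 18 * X ^ 4 + 10 * X ^ 5 + X ^ 6 + 2 * X ^ 7 + 7 * X ^ 8) (E := 5 + 15 * X + 26 * X ^ 2 + 25 * X ^ 3 + 28 * X ^ 4 + 26 * X ^ 5 + 31 * X ^ 6 + 30 * X ^ 7 + 34 * X ^ 8 + 29 * X ^ 9 + 31 * X ^ 10 + 17 * X ^ 11 + 19 * X ^ 12 + 15 * X ^ 13 + 11 * X ^ 14 + 8 * X ^ 15 + 4 * X ^ 16) (by unfold fp; ring)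

private lemma fp_natDegree : fp.natDegree = 9 := by unfold fp; compute_degree!

private lemma fp_monic : fp.Monic := by unfold fp; monicity!

private lemma dvd_X_pow_card {K : Type*} [Field K] [Fintype K] (h : K[X])
    (hi : Irreducible h) (hm : h.Monic) :
    h ∣ (X ^ (Fintype.card K ^ h.natDegree) - X : K[X]) := by
  haveI := Fact.mk hi
  have hne : h ≠ 0 := hi.ne_zero
  let pb := AdjoinRoot.powerBasis hne
  haveI : Module.Finite K (AdjoinRoot h) := pb.finite
  haveI : Finite (AdjoinRoot h) := Module.finite_of_finite K
  haveI : Fintype (AdjoinRoot h) := Fintype.ofFinite _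
  have hcard : Fintype.card (AdjoinRoot h) = Fintype.card K ^ h.natDegree := by
    rw [Module.card_fintype pb.basis, Fintype.card_fin, AdjoinRoot.powerBasis_dim]
  have hzero : (aeval (AdjoinRoot.root h)) ((X ^ (Fintype.card K ^ h.natDegree) - X : K[X])) = 0 := by
    rw [map_sub, map_pow, aeval_X, ← hcard, FiniteField.pow_card, sub_self]
  have := minpoly.dvd K (AdjoinRoot.root h) hzero
  rwa [AdjoinRoot.minpoly_root hne, hm.leadingCoeff, inv_one, map_one, mul_one] at this

private lemma fp_irreducible : Irreducible fp := by
  obtain ⟨c1, c2, c3, c4⟩ := coprime_all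
  have h1 : fp ≠ 1 := fun h => by simpa [h] using fp_natDegree
  rw [fp_monic.irreducible_iff_lt_natDegree_lt h1]
  intro q hq hdeg hdvd
  rw [fp_natDegree] at hdeg
  simp only [Finset.mem_Ioc] at hdeg
  have hq0 : q ≠ 0 := hq.ne_zero
  have hqu : ¬ IsUnit q := by
    intro hu
    rw [natDegree_eq_zero_of_isUnit hu] at hdeg
    exact absurd hdeg.1 (lt_irrefl 0)
  obtain ⟨g, hgi, hgq⟩ := WfDvdMonoid.exists_irreducible_factor hqu hq0
  have hg0 : g ≠ 0 := hgi.ne_zero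
  set g' : Fq[X] := g * C (g.leadingCoeff)⁻¹ with hg'def
  have hlc : g.leadingCoeff ≠ 0 := leadingCoeff_ne_zero.mpr hg0
  have hunit : IsUnit (C (g.leadingCoeff)⁻¹ : Fq[X]) :=
    isUnit_C.mpr (isUnit_iff_ne_zero.mpr (inv_ne_zero hlc))
  have hassoc : Associated g g' := ⟨hunit.unit, by rw [hg'def, IsUnit.unit_spec]⟩
  have hg'i : Irreducible g' := hassoc.irreducible hgi
  have hg'm : g'.Monic := monic_mul_leadingCoeff_inv hg0
  have hdeg' : g'.natDegree = g.natDegree := natDegree_mul_leadingCoeff_inv g hg0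
  have hg'fp : g' ∣ fp := (hassoc.dvd_iff_dvd_left).mp (hgq.trans hdvd)
  have he1 : 1 ≤ g'.natDegree := hdeg' ▸ hgi.natDegree_pos
  have he4 : g'.natDegree ≤ 4 :=
    hdeg' ▸ le_trans (natDegree_le_of_dvd hgq hq0) hdeg.2
  have hd := dvd_X_pow_card g' hg'i hg'm
  rw [ZMod.card] at hd
  set e := g'.natDegree with hedef
  interval_cases e
  · exact hg'i.not_isUnit (c1.isUnit_of_dvd' hg'fp (by simpa using hd))
  · exact hg'i.not_isUnit (c2.isUnit_of_dvd' hg'fp (by norm_num at hd; simpa using hd))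
  · exact hg'i.not_isUnit (c3.isUnit_of_dvd' hg'fp (by norm_num at hd; simpa using hd))
  · exact hg'i.not_isUnit (c4.isUnit_of_dvd' hg'fp (by norm_num at hd; simpa using hd))

/-- The coherence polynomial over `ℤ`. -/
noncomputable def Pz : ℤ[X] := 1 + 5 * X - 8 * X ^ 2 - 80 * X ^ 3 - 78 * X ^ 4 + 146 * X ^ 5
  - 80 * X ^ 6 - 584 * X ^ 7 + 677 * X ^ 8 + 1537 * X ^ 9

private lemma Pz_natDegree : Pz.natDegree = 9 := by unfold Pz; compute_degree!

private lemma Pz_coeff_zero : Pz.coeff 0 = 1 := by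
  rw [coeff_zero_eq_eval_zero]; unfold Pz; simp

private lemma Pz_map : Pz.map (Int.castRingHom Fq) = 17 * fp := by
  have h1 : Pz.map (Int.castRingHom Fq) = (1 + 5 * X - 8 * X ^ 2 - 80 * X ^ 3 - 78 * X ^ 4
      + 146 * X ^ 5 - 80 * X ^ 6 - 584 * X ^ 7 + 677 * X ^ 8 + 1537 * X ^ 9 : Fq[X]) := by
    unfold Pz
    simp only [Polynomial.map_add, Polynomial.map_sub, Polynomial.map_mul, Polynomial.map_pow,
      Polynomial.map_X, Polynomial.map_one, Polynomial.map_ofNat]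
  have h2 : (1 + 5 * X - 8 * X ^ 2 - 80 * X ^ 3 - 78 * X ^ 4
      + 146 * X ^ 5 - 80 * X ^ 6 - 584 * X ^ 7 + 677 * X ^ 8 + 1537 * X ^ 9 : Fq[X])
      = 17 * fp + 19 * ((-8) + (-6) * X + (-4) * X ^ 2 + (-6) * X ^ 3 + (-5) * X ^ 4 + 5 * X ^ 5 + (-6) * X ^ 6 + (-37) * X ^ 7 + 24 * X ^ 8 + 80 * X ^ 9) := by
    unfold fp; ring
  rw [h1, h2, nineteen, zero_mul, add_zero]

private lemma Pz_map_irreducible : Irreducible (Pz.map (Int.castRingHom Fq)) := by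
  rw [Pz_map]
  have hunit : IsUnit (17 : Fq[X]) := by
    rw [← map_ofNat (C : Fq →+* Fq[X]) 17]
    exact isUnit_C.mpr (isUnit_iff_ne_zero.mpr (by decide))
  exact (Associated.irreducible ⟨hunit.unit, by rw [IsUnit.unit_spec, mul_comm]⟩ fp_irreducible)

private lemma Pz_irreducible : Irreducible Pz := by
  have hPz0 : Pz ≠ 0 := fun h0 => by simpa [h0] using Pz_natDegree
  constructor
  · intro hu
    have := natDegree_eq_zero_of_isUnit hu
    rw [Pz_natDegree] at this
    exact absurd this (by norm_num)
  · intro g h hgh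
    have hg0 : g ≠ 0 := fun h0 => hPz0 (by rw [hgh, h0, zero_mul])
    have hh0 : h ≠ 0 := fun h0 => hPz0 (by rw [hgh, h0, mul_zero])
    have hmap : Pz.map (Int.castRingHom Fq)
        = g.map (Int.castRingHom Fq) * h.map (Int.castRingHom Fq) := by
      rw [hgh, Polynomial.map_mul]
    have hmi := Pz_map_irreducible
    have hm0 : Pz.map (Int.castRingHom Fq) ≠ 0 := hmi.ne_zero
    have hbg0 : g.map (Int.castRingHom Fq) ≠ 0 := fun h0 => hm0 (by rw [hmap, h0, zero_mul])
    have hbh0 : h.map (Int.castRingHom Fq) ≠ 0 := fun h0 => hm0 (by rw [hmap, h0, mul_zero])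
    have hdeg9 : (Pz.map (Int.castRingHom Fq)).natDegree = 9 := by
      rw [Pz_map]
      rw [← map_ofNat (C : Fq →+* Fq[X]) 17, natDegree_C_mul (by decide), fp_natDegree]
    have h9 : g.natDegree + h.natDegree = 9 := by
      rw [← Polynomial.natDegree_mul hg0 hh0, ← hgh, Pz_natDegree]
    have hb9 : (g.map (Int.castRingHom Fq)).natDegree + (h.map (Int.castRingHom Fq)).natDegree = 9 := by
      rw [← Polynomial.natDegree_mul hbg0 hbh0, ← hmap, hdeg9]
    have hgle : (g.map (Int.castRingHom Fq)).natDegree ≤ g.natDegree := natDegree_map_le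
    have hhle : (h.map (Int.castRingHom Fq)).natDegree ≤ h.natDegree := natDegree_map_le
    have hcoeff : g.coeff 0 * h.coeff 0 = 1 := by
      rw [← mul_coeff_zero, ← hgh, Pz_coeff_zero]
    rcases hmi.isUnit_or_isUnit hmap with hu | hu
    · left
      have : g.natDegree = 0 := by
        have := natDegree_eq_zero_of_isUnit hu
        omega
      rw [eq_C_of_natDegree_eq_zero this]
      exact isUnit_C.mpr (IsUnit.of_mul_eq_one _ hcoeff)
    · right
      have : h.natDegree = 0 := by
        have := natDegree_eq_zero_of_isUnit hu
        omega
      rw [eq_C_of_natDegree_eq_zero this]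
      exact isUnit_C.mpr (IsUnit.of_mul_eq_one _ (mul_comm (g.coeff 0) (h.coeff 0) ▸ hcoeff))

/-- The polynomial `p(x) = 1 + 5x − 8x² − 80x³ − 78x⁴ + 146x⁵ − 80x⁶ − 584x⁷ + 677x⁸ + 1537x⁹`
is irreducible over `ℚ`. -/
theorem coherence_poly_irreducible :
    Irreducible (1 + 5 * X - 8 * X ^ 2 - 80 * X ^ 3 - 78 * X ^ 4 + 146 * X ^ 5
      - 80 * X ^ 6 - 584 * X ^ 7 + 677 * X ^ 8 + 1537 * X ^ 9 : ℚ[X]) := by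
  have hprim : Pz.IsPrimitive := by
    intro c hc
    have := (C_dvd_iff_dvd_coeff c Pz).mp hc 0
    rw [Pz_coeff_zero] at this
    exact isUnit_of_dvd_one this
  have hirr := (Polynomial.IsPrimitive.Int.irreducible_iff_irreducible_map_cast hprim).mp Pz_irreducible
  have hmap : Pz.map (Int.castRingHom ℚ) = (1 + 5 * X - 8 * X ^ 2 - 80 * X ^ 3 - 78 * X ^ 4
      + 146 * X ^ 5 - 80 * X ^ 6 - 584 * X ^ 7 + 677 * X ^ 8 + 1537 * X ^ 9 : ℚ[X]) := by
    unfold Pz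
    simp only [Polynomial.map_add, Polynomial.map_sub, Polynomial.map_mul, Polynomial.map_pow,
      Polynomial.map_X, Polynomial.map_one, Polynomial.map_ofNat]
  rwa [hmap] at hirr
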